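/- Let (Φ, ω): 𝕍 → 𝕍' be a morphism of vector spaces with ω ∈ ∧²V*. For w = v⊕α ∈ 𝕍 and w' = v'⊕α' ∈ 𝕍', one has w ~_{(Φ,ω)} w' if and only if for all ψ' ∈ ∧(V')*, ρ(w)(e^ω ∧ Φ*ψ') = e^ω ∧ Φ*(ρ(w')ψ'). -/
import Mathlib


set_option synthInstance.maxHeartbeats 1000000
set_option maxHeartbeats 1000000

open ExteriorAlgebra CliffordAlgebra Module

/-- Clifford action of `V ⊕ V*` on `∧ V*`. -/
noncomputable def cliffordRho {K V : Type*} [Field K] [AddCommGroup V] [Module K V]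
    (w : V × Module.Dual K V) (φ : ExteriorAlgebra K (Module.Dual K V)) :
    ExteriorAlgebra K (Module.Dual K V) :=
  CliffordAlgebra.contractLeft (Module.Dual.eval K V w.1) φ + ExteriorAlgebra.ι K w.2 * φ

/-- Truncated exponential in an algebra, valid for nilpotent arguments of index `≤ n`. -/
noncomputable def expA {K A : Type*} [Field K] [Ring A] [Algebra K A] (n : ℕ) (a : A) : A :=
  ∑ k ∈ Finset.range (n + 1), (k.factorial : K)⁻¹ • a ^ k

/-- The pullback algebra homomorphism `Φ* : ∧ (V')* → ∧ V*` induced by `Φ : V → V'`. -/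
noncomputable def extPullback {K V V' : Type*} [Field K] [AddCommGroup V] [Module K V]
    [AddCommGroup V'] [Module K V'] (Φ : V →ₗ[K] V') :
    ExteriorAlgebra K (Module.Dual K V') →ₐ[K] ExteriorAlgebra K (Module.Dual K V) :=
  ExteriorAlgebra.lift K
    ⟨(ExteriorAlgebra.ι K).comp Φ.dualMap, fun _ => ExteriorAlgebra.ι_sq_zero _⟩


set_option linter.unusedSectionVars false

section aux
variable {K : Type*} [Field K] {M : Type*} [AddCommGroup M] [Module K M]

lemma aux_extPower_eq_zero [FiniteDimensional K M] {m : ℕ} (hm : Module.finrank K M < m)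
    {x : ExteriorAlgebra K M} (hx : x ∈ ⋀[K]^m M) : x = 0 := by
  rw [← ExteriorAlgebra.ιMulti_span_fixedDegree] at hx
  refine Submodule.span_induction (fun y hy => ?_) rfl (fun a b _ _ ha hb => by rw [ha, hb, add_zero])
    (fun c a _ ha => by rw [ha, smul_zero]) hx
  obtain ⟨v, rfl⟩ := hy
  refine AlternatingMap.map_linearDependent _ v (fun h => ?_)
  have := h.fintype_card_le_finrank
  rw [Fintype.card_fin] at this
  omega

lemma aux_swap (a b : M) : ι K a * ι K b = -(ι K b * ι K a) :=
  eq_neg_of_add_eq_zero_left (ExteriorAlgebra.ι_add_mul_swap a b)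

lemma aux_comm {ω : ExteriorAlgebra K M} (hω : ω ∈ ⋀[K]^2 M) (m : M) :
    ι K m * ω = ω * ι K m := by
  have hω' : ω ∈ LinearMap.range (ι K (M := M)) * LinearMap.range (ι K (M := M)) := by
    rw [← pow_two]; exact hω
  refine Submodule.mul_induction_on hω' (fun a ha b hb => ?_) (fun x y hx hy => by
    rw [mul_add, add_mul, hx, hy])
  obtain ⟨x, rfl⟩ := ha
  obtain ⟨y, rfl⟩ := hb
  rw [← mul_assoc, aux_swap m x, neg_mul, mul_assoc, aux_swap m y, mul_neg, neg_neg, mul_assoc]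

lemma aux_mul_algebraMap (r : K) (x : ExteriorAlgebra K M) :
    x * algebraMap K (ExteriorAlgebra K M) r = r • x := by
  rw [← Algebra.commutes, ← Algebra.smul_def]

lemma aux_contract_mem (f : Module.Dual K M) {ω : ExteriorAlgebra K M} (hω : ω ∈ ⋀[K]^2 M) :
    CliffordAlgebra.contractLeft f ω ∈ LinearMap.range (ι K (M := M)) := by
  have hω' : ω ∈ LinearMap.range (ι K (M := M)) * LinearMap.range (ι K (M := M)) := by
    rw [← pow_two]; exact hω
  refine Submodule.mul_induction_on hω' (fun a ha b hb => ?_) (fun x y hx hy => by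
    rw [map_add]; exact Submodule.add_mem _ hx hy)
  obtain ⟨x, rfl⟩ := ha
  obtain ⟨y, rfl⟩ := hb
  rw [CliffordAlgebra.contractLeft_ι_mul, CliffordAlgebra.contractLeft_ι, aux_mul_algebraMap,
    ← map_smul, ← map_smul, ← map_sub]
  exact ⟨_, rfl⟩

lemma aux_contract_mul (f : Module.Dual K M) {ω : ExteriorAlgebra K M} (hω : ω ∈ ⋀[K]^2 M)
    (x : ExteriorAlgebra K M) :
    CliffordAlgebra.contractLeft f (ω * x) =
      CliffordAlgebra.contractLeft f ω * x + ω * CliffordAlgebra.contractLeft f x := by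
  have hω' : ω ∈ LinearMap.range (ι K (M := M)) * LinearMap.range (ι K (M := M)) := by
    rw [← pow_two]; exact hω
  refine Submodule.mul_induction_on hω' (fun a ha b hb => ?_) (fun y z hy hz => by
    rw [add_mul, map_add, hy, hz, map_add, add_mul, add_mul]; abel)
  obtain ⟨a, rfl⟩ := ha
  obtain ⟨b, rfl⟩ := hb
  rw [mul_assoc, CliffordAlgebra.contractLeft_ι_mul, CliffordAlgebra.contractLeft_ι_mul,
    CliffordAlgebra.contractLeft_ι_mul, CliffordAlgebra.contractLeft_ι, aux_mul_algebraMap]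
  simp only [mul_sub, sub_mul, smul_mul_assoc, mul_smul_comm, mul_assoc]
  abel

lemma aux_comm_pow {ω : ExteriorAlgebra K M} (hω : ω ∈ ⋀[K]^2 M) (m : M) (k : ℕ) :
    ι K m * ω ^ k = ω ^ k * ι K m := by
  induction k with
  | zero => simp
  | succ k ih => rw [pow_succ, ← mul_assoc, ih, mul_assoc, aux_comm hω, ← mul_assoc]

lemma aux_commE {ω : ExteriorAlgebra K M} (hω : ω ∈ ⋀[K]^2 M) {n : ℕ}
    {z : ExteriorAlgebra K M} (hz : z ∈ LinearMap.range (ι K (M := M))) :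
    expA (K := K) n ω * z = z * expA (K := K) n ω := by
  obtain ⟨m, rfl⟩ := hz
  rw [expA, Finset.sum_mul, Finset.mul_sum]
  exact Finset.sum_congr rfl fun k _ => by
    rw [smul_mul_assoc, mul_smul_comm, aux_comm_pow hω]

lemma aux_comm_contract {ω : ExteriorAlgebra K M} (hω : ω ∈ ⋀[K]^2 M) (f : Module.Dual K M) :
    ω * CliffordAlgebra.contractLeft f ω = CliffordAlgebra.contractLeft f ω * ω := by
  obtain ⟨m, hm⟩ := aux_contract_mem f hω
  rw [← hm, aux_comm hω]

lemma aux_contract_pow (f : Module.Dual K M) {ω : ExteriorAlgebra K M} (hω : ω ∈ ⋀[K]^2 M)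
    (k : ℕ) (x : ExteriorAlgebra K M) :
    CliffordAlgebra.contractLeft f (ω ^ (k + 1) * x) =
      ((k + 1 : ℕ) : K) • (CliffordAlgebra.contractLeft f ω * (ω ^ k * x)) +
        ω ^ (k + 1) * CliffordAlgebra.contractLeft f x := by
  induction k generalizing x with
  | zero => simp [aux_contract_mul f hω]
  | succ k ih =>
      have : ω ^ (k + 1 + 1) * x = ω * (ω ^ (k + 1) * x) := by
        rw [← mul_assoc, ← pow_succ']
      have e1 : ω * (CliffordAlgebra.contractLeft f ω * (ω ^ k * x)) =
          CliffordAlgebra.contractLeft f ω * (ω ^ (k + 1) * x) := by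
        rw [← mul_assoc, aux_comm_contract hω f, mul_assoc, ← mul_assoc ω, ← pow_succ']
      have e2 : ω * (ω ^ (k + 1) * CliffordAlgebra.contractLeft f x) =
          ω ^ (k + 1 + 1) * CliffordAlgebra.contractLeft f x := by
        rw [← mul_assoc, ← pow_succ']
      rw [this, aux_contract_mul f hω, ih, mul_add, mul_smul_comm, e1, e2]
      have hcast : ((k + 1 + 1 : ℕ) : K) = ((k + 1 : ℕ) : K) + 1 := by push_cast; ring
      rw [hcast, add_smul, one_smul]
      abel

lemma aux_pow_mem {ω : ExteriorAlgebra K M} (hω : ω ∈ ⋀[K]^2 M) (k : ℕ) :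
    ω ^ k ∈ ⋀[K]^(2 * k) M := by
  have : ω ^ k ∈ (LinearMap.range (ι K (M := M)) ^ 2) ^ k := Submodule.pow_mem_pow _ hω k
  rwa [← pow_mul] at this

lemma aux_top [FiniteDimensional K M] (f : Module.Dual K M) {ω : ExteriorAlgebra K M}
    (hω : ω ∈ ⋀[K]^2 M) {n : ℕ} (hn : Module.finrank K M ≤ n) :
    CliffordAlgebra.contractLeft f ω * ω ^ n = 0 := by
  rcases Nat.eq_zero_or_pos n with h0 | hpos
  · subst h0
    have : ω = 0 := aux_extPower_eq_zero (by omega) hω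
    rw [this, map_zero, zero_mul]
  · have : ω ^ n = 0 := aux_extPower_eq_zero (by omega) (aux_pow_mem hω n)
    rw [this, mul_zero]

lemma aux_fact_inv [CharZero K] (k : ℕ) :
    (((k + 1).factorial : K))⁻¹ * ((k + 1 : ℕ) : K) = ((k.factorial : K))⁻¹ := by
  have h1 : ((k + 1 : ℕ) : K) ≠ 0 := Nat.cast_ne_zero.2 k.succ_ne_zero
  rw [Nat.factorial_succ, Nat.cast_mul, mul_inv, mul_comm (((k+1:ℕ):K))⁻¹, mul_assoc,
    inv_mul_cancel₀ h1, mul_one]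

lemma aux_dE [CharZero K] [FiniteDimensional K M] (f : Module.Dual K M) {ω : ExteriorAlgebra K M}
    (hω : ω ∈ ⋀[K]^2 M) {n : ℕ} (hn : Module.finrank K M ≤ n) (x : ExteriorAlgebra K M) :
    CliffordAlgebra.contractLeft f (expA (K := K) n ω * x) =
      CliffordAlgebra.contractLeft f ω * (expA (K := K) n ω * x) +
        expA (K := K) n ω * CliffordAlgebra.contractLeft f x := by
  have hEx : expA (K := K) n ω * x = ∑ k ∈ Finset.range (n + 1), (k.factorial : K)⁻¹ • (ω ^ k * x) := by
    rw [expA, Finset.sum_mul]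
    exact Finset.sum_congr rfl fun k _ => smul_mul_assoc _ _ _
  rw [hEx, map_sum]
  simp only [map_smul]
  rw [Finset.sum_range_succ']
  have hterm : ∀ k, (((k + 1).factorial : K))⁻¹ • (CliffordAlgebra.contractLeft f) (ω ^ (k + 1) * x) =
      (k.factorial : K)⁻¹ • (CliffordAlgebra.contractLeft f ω * (ω ^ k * x)) +
        (((k + 1).factorial : K))⁻¹ • (ω ^ (k + 1) * CliffordAlgebra.contractLeft f x) := by
    intro k
    rw [aux_contract_pow f hω, smul_add, smul_smul, aux_fact_inv]
  simp only [hterm]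
  rw [Finset.sum_add_distrib]
  have hA : CliffordAlgebra.contractLeft f ω * (expA (K := K) n ω * x) =
      ∑ k ∈ Finset.range n, (k.factorial : K)⁻¹ • (CliffordAlgebra.contractLeft f ω * (ω ^ k * x)) := by
    rw [hEx, Finset.mul_sum]
    simp only [mul_smul_comm]
    rw [Finset.sum_range_succ]
    have : CliffordAlgebra.contractLeft f ω * (ω ^ n * x) = 0 := by
      rw [← mul_assoc, aux_top f hω hn, zero_mul]
    rw [this, smul_zero, add_zero]
  have hB : expA (K := K) n ω * CliffordAlgebra.contractLeft f x =
      (∑ k ∈ Finset.range n, (((k + 1).factorial : K))⁻¹ • (ω ^ (k + 1) * CliffordAlgebra.contractLeft f x)) +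
        (((0 : ℕ).factorial : K))⁻¹ • (ω ^ 0 * CliffordAlgebra.contractLeft f x) := by
    rw [expA, Finset.sum_mul, Finset.sum_range_succ']
    simp only [smul_mul_assoc]
  rw [← hEx, hA, hB]
  simp only [pow_zero, one_mul, Nat.factorial_zero, Nat.cast_one, inv_one, one_smul]
  abel

lemma aux_grade1 {ω : ExteriorAlgebra K M} (hω : ω ∈ ⋀[K]^2 M) {n : ℕ}
    {z : ExteriorAlgebra K M} (hz : z ∈ LinearMap.range (ι K (M := M)))
    (h : z * expA (K := K) n ω = 0) : z = 0 := by
  have e1 : ⋀[K]^1 M = LinearMap.range (ι K (M := M)) := pow_one _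
  have hz1 : z ∈ ⋀[K]^1 M := e1.symm ▸ hz
  have hsum : z * expA (K := K) n ω =
      z + ∑ k ∈ Finset.range n, (((k + 1).factorial : K))⁻¹ • (z * ω ^ (k + 1)) := by
    rw [expA, Finset.mul_sum, Finset.sum_range_succ']
    simp only [mul_smul_comm]
    rw [pow_zero, mul_one, Nat.factorial_zero, Nat.cast_one, inv_one, one_smul, add_comm]
  set P := GradedAlgebra.proj (fun i : ℕ => ⋀[K]^i M) 1 with hP
  have h1 : P z = z := by
    rw [hP, GradedAlgebra.proj_apply, DirectSum.decompose_of_mem_same (fun i : ℕ => ⋀[K]^i M) hz1]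
  have h2 : ∀ k, P (z * ω ^ (k + 1)) = 0 := fun k => by
    rw [hP, GradedAlgebra.proj_apply,
      DirectSum.decompose_of_mem_ne (fun i : ℕ => ⋀[K]^i M) (SetLike.mul_mem_graded hz1 (aux_pow_mem hω (k + 1)))]
    omega
  have hfin := congrArg P h
  rw [hsum, map_add, map_sum, h1, map_zero] at hfin
  simp only [map_smul, h2, smul_zero, Finset.sum_const_zero, add_zero] at hfin
  exact hfin

lemma aux_grade0 {ω : ExteriorAlgebra K M} (hω : ω ∈ ⋀[K]^2 M) {n : ℕ}
    {c : K} (h : c • expA (K := K) n ω = 0) : c = 0 := by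
  have hsum : expA (K := K) n ω =
      1 + ∑ k ∈ Finset.range n, (((k + 1).factorial : K))⁻¹ • ω ^ (k + 1) := by
    rw [expA, Finset.sum_range_succ']
    rw [pow_zero, Nat.factorial_zero, Nat.cast_one, inv_one, one_smul, add_comm]
  set P := GradedAlgebra.proj (fun i : ℕ => ⋀[K]^i M) 0 with hP
  have h1 : P 1 = 1 := by
    rw [hP, GradedAlgebra.proj_apply,
      DirectSum.decompose_of_mem_same (fun i : ℕ => ⋀[K]^i M) (SetLike.one_mem_graded _)]
  have h2 : ∀ k, P (ω ^ (k + 1)) = 0 := fun k => by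
    rw [hP, GradedAlgebra.proj_apply,
      DirectSum.decompose_of_mem_ne (fun i : ℕ => ⋀[K]^i M) (aux_pow_mem hω (k + 1))]
    omega
  have hfin := congrArg P h
  rw [map_smul, hsum, map_add, map_sum, h1, map_zero] at hfin
  simp only [map_smul, h2, smul_zero, Finset.sum_const_zero, add_zero] at hfin
  rcases smul_eq_zero.mp hfin with hc | h1
  · exact hc
  · exact absurd h1 one_ne_zero

end aux

section main
variable {K V V' : Type*} [Field K] [CharZero K]
    [AddCommGroup V] [Module K V] [FiniteDimensional K V]
    [AddCommGroup V'] [Module K V'] [FiniteDimensional K V']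

lemma extPullback_ι (Φ : V →ₗ[K] V') (β : Module.Dual K V') :
    extPullback Φ (ι K β) = ι K (β.comp Φ) := by
  rw [extPullback, ExteriorAlgebra.lift_ι_apply]
  simp [LinearMap.dualMap_apply']

lemma cliffordRho_add (u : V × Module.Dual K V) (a b : ExteriorAlgebra K (Module.Dual K V)) :
    cliffordRho u (a + b) = cliffordRho u a + cliffordRho u b := by
  simp only [cliffordRho, map_add, mul_add]; abel

end main

lemma aux_cancel {A : Type*} [AddCommGroup A] {a b c d : A}
    (h : a + b + c = d + (c + a)) : b = d := by
  have h2 : (a + b + c) - (d + (c + a)) = b - d := by abel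
  rw [h, sub_self] at h2
  exact sub_eq_zero.mp h2.symm

section main2
variable {K V V' : Type*} [Field K] [CharZero K]
    [AddCommGroup V] [Module K V] [FiniteDimensional K V]
    [AddCommGroup V'] [Module K V'] [FiniteDimensional K V']

lemma aux_rev (Φ : V →ₗ[K] V') (ω : ExteriorAlgebra K (Module.Dual K V))
    (hω : ω ∈ (⋀[K]^2 (Module.Dual K V)))
    (v : V) (α : Module.Dual K V) (v' : V') (α' : Module.Dual K V')
    (h1 : Φ v = v')
    (h2 : ι K (α'.comp Φ) = ι K α + CliffordAlgebra.contractLeft (Module.Dual.eval K V v) ω)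
    (ψ' : ExteriorAlgebra K (Module.Dual K V')) :
    cliffordRho (v, α) (expA (K := K) (Module.finrank K V) ω * extPullback Φ ψ') =
      expA (K := K) (Module.finrank K V) ω * extPullback Φ (cliffordRho (v', α') ψ') := by
  have hn : Module.finrank K (Module.Dual K V) ≤ Module.finrank K V :=
    le_of_eq Subspace.dual_finrank_eq
  have hιmem : ∀ g : Module.Dual K V,
      ι K g ∈ LinearMap.range (ι K (M := Module.Dual K V)) := fun g => ⟨g, rfl⟩
  have hcomm : ∀ z ∈ LinearMap.range (ι K (M := Module.Dual K V)), ∀ y,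
      expA (K := K) (Module.finrank K V) ω * (z * y) =
        z * (expA (K := K) (Module.finrank K V) ω * y) := fun z hz y => by
    rw [← mul_assoc, aux_commE hω hz, mul_assoc]
  induction ψ' using CliffordAlgebra.left_induction with
  | algebraMap r =>
      rw [AlgHom.commutes, aux_mul_algebraMap]
      have hr' : cliffordRho (v', α') (algebraMap K _ r) = r • ι K α' := by
        simp [cliffordRho, CliffordAlgebra.contractLeft_algebraMap, aux_mul_algebraMap]
      rw [hr', map_smul, extPullback_ι, mul_smul_comm]
      simp only [cliffordRho, map_smul, mul_smul_comm]
      rw [← smul_add]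
      congr 1
      have hDE1 : CliffordAlgebra.contractLeft (Module.Dual.eval K V v)
          (expA (K := K) (Module.finrank K V) ω) =
          CliffordAlgebra.contractLeft (Module.Dual.eval K V v) ω *
            expA (K := K) (Module.finrank K V) ω := by
        have := aux_dE (Module.Dual.eval K V v) hω hn (1 : ExteriorAlgebra K (Module.Dual K V))
        simpa [CliffordAlgebra.contractLeft_one] using this
      rw [hDE1, aux_commE hω (hιmem _), h2, add_mul]
      abel
  | add x y hx hy =>
      rw [map_add, mul_add, cliffordRho_add, cliffordRho_add, map_add, mul_add, hx, hy]
  | ι_mul x m hx =>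
      simp only [cliffordRho, map_add, map_mul, extPullback_ι, mul_add] at hx
      have key : expA (K := K) (Module.finrank K V) ω *
          CliffordAlgebra.contractLeft (Module.Dual.eval K V v) (extPullback Φ x) =
          expA (K := K) (Module.finrank K V) ω *
            extPullback Φ (CliffordAlgebra.contractLeft (Module.Dual.eval K V' v') x) := by
        rw [aux_dE _ hω hn, hcomm _ (hιmem (α'.comp Φ)), h2, add_mul] at hx
        exact aux_cancel hx
      have hev : Module.Dual.eval K V v (m.comp Φ) = m v' := by
        simp [← h1]
      have hev' : Module.Dual.eval K V' v' m = m v' := rfl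
      rw [map_mul, extPullback_ι]
      simp only [cliffordRho]
      rw [aux_dE _ hω hn]
      simp only [CliffordAlgebra.contractLeft_ι_mul]
      simp only [map_add, map_sub, map_smul, map_mul, extPullback_ι]
      rw [hev, hev']
      simp only [mul_add, mul_sub, mul_smul_comm]
      simp only [hcomm _ (hιmem (m.comp Φ)), hcomm _ (hιmem (α'.comp Φ))]
      rw [key, h2]
      simp only [add_mul]
      abel

lemma aux_fwd (Φ : V →ₗ[K] V') (ω : ExteriorAlgebra K (Module.Dual K V))
    (hω : ω ∈ (⋀[K]^2 (Module.Dual K V)))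
    (v : V) (α : Module.Dual K V) (v' : V') (α' : Module.Dual K V')
    (H : ∀ ψ' : ExteriorAlgebra K (Module.Dual K V'),
      cliffordRho (v, α) (expA (K := K) (Module.finrank K V) ω * extPullback Φ ψ') =
        expA (K := K) (Module.finrank K V) ω * extPullback Φ (cliffordRho (v', α') ψ')) :
    Φ v = v' ∧ ι K (α'.comp Φ) =
      ι K α + CliffordAlgebra.contractLeft (Module.Dual.eval K V v) ω := by
  have hn : Module.finrank K (Module.Dual K V) ≤ Module.finrank K V :=
    le_of_eq Subspace.dual_finrank_eq
  have hιmem : ∀ g : Module.Dual K V,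
      ι K g ∈ LinearMap.range (ι K (M := Module.Dual K V)) := fun g => ⟨g, rfl⟩
  have hcomm : ∀ z ∈ LinearMap.range (ι K (M := Module.Dual K V)), ∀ y,
      expA (K := K) (Module.finrank K V) ω * (z * y) =
        z * (expA (K := K) (Module.finrank K V) ω * y) := fun z hz y => by
    rw [← mul_assoc, aux_commE hω hz, mul_assoc]
  have hDE1 : CliffordAlgebra.contractLeft (Module.Dual.eval K V v)
      (expA (K := K) (Module.finrank K V) ω) =
      CliffordAlgebra.contractLeft (Module.Dual.eval K V v) ω *
        expA (K := K) (Module.finrank K V) ω := by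
    have := aux_dE (Module.Dual.eval K V v) hω hn (1 : ExteriorAlgebra K (Module.Dual K V))
    simpa [CliffordAlgebra.contractLeft_one] using this
  -- second condition, from ψ' = 1
  have H1 := H 1
  rw [map_one, mul_one] at H1
  have hrho1 : cliffordRho (v', α') 1 = ι K α' := by
    simp [cliffordRho, CliffordAlgebra.contractLeft_one]
  rw [hrho1, extPullback_ι] at H1
  simp only [cliffordRho] at H1
  rw [hDE1, aux_commE hω (hιmem (α'.comp Φ))] at H1
  have hz : (ι K α + CliffordAlgebra.contractLeft (Module.Dual.eval K V v) ω -
      ι K (α'.comp Φ)) * expA (K := K) (Module.finrank K V) ω = 0 := by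
    rw [sub_mul, add_mul, sub_eq_zero, ← H1, add_comm]
  have hzmem : ι K α + CliffordAlgebra.contractLeft (Module.Dual.eval K V v) ω -
      ι K (α'.comp Φ) ∈ LinearMap.range (ι K (M := Module.Dual K V)) :=
    Submodule.sub_mem _ (Submodule.add_mem _ (hιmem α) (aux_contract_mem _ hω)) (hιmem _)
  have h2 : ι K (α'.comp Φ) =
      ι K α + CliffordAlgebra.contractLeft (Module.Dual.eval K V v) ω := by
    have hg := aux_grade1 hω hzmem hz
    rw [sub_eq_zero] at hg
    exact hg.symm
  refine ⟨?_, h2⟩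
  -- first condition, from ψ' = ι β'
  have hkey : ∀ β' : Module.Dual K V', β' (Φ v) = β' v' := by
    intro β'
    have Hb := H (ι K β')
    rw [extPullback_ι] at Hb
    simp only [cliffordRho, CliffordAlgebra.contractLeft_ι] at Hb
    rw [aux_dE _ hω hn, CliffordAlgebra.contractLeft_ι] at Hb
    simp only [map_add, map_mul, AlgHom.commutes, extPullback_ι, mul_add,
      aux_mul_algebraMap] at Hb
    rw [hcomm _ (hιmem (α'.comp Φ)), h2, add_mul] at Hb
    have hsc := aux_cancel Hb
    have h5 : ((Module.Dual.eval K V v) (β'.comp Φ) - (Module.Dual.eval K V' v') β') •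
        expA (K := K) (Module.finrank K V) ω = 0 := by
      rw [sub_smul, hsc, sub_self]
    have h6 := aux_grade0 hω h5
    have h7 := sub_eq_zero.mp h6
    exact h7
  have h8 : ∀ φ : Module.Dual K V', φ (Φ v - v') = 0 := fun φ => by
    rw [map_sub, hkey φ, sub_self]
  exact sub_eq_zero.mp ((Module.forall_dual_apply_eq_zero_iff K (Φ v - v')).mp h8)

end main2

/-- for a morphism `(Φ, ω)`, `w ~_{(Φ,ω)} w'` holds if and only if
`ρ(w)(e^ω ∧ Φ*ψ') = e^ω ∧ Φ*(ρ(w')ψ')` for all `ψ' ∈ ∧(V')*`.  The relation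
`w ~_{(Φ,ω)} w'` means `Φ(v) = v'` and `Φ*α' = α + ι(v)ω`, with the 2-form
`ω ∈ ∧²V*` given as a degree-two element of the exterior algebra. -/
theorem pure_spinors_stmt9 {K V V' : Type*} [Field K] [CharZero K]
    [AddCommGroup V] [Module K V] [FiniteDimensional K V]
    [AddCommGroup V'] [Module K V'] [FiniteDimensional K V']
    (Φ : V →ₗ[K] V')
    (ω : ExteriorAlgebra K (Module.Dual K V)) (hω : ω ∈ (⋀[K]^2 (Module.Dual K V)))
    (w : V × Module.Dual K V) (w' : V' × Module.Dual K V') :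
    (Φ w.1 = w'.1 ∧
      ExteriorAlgebra.ι K (w'.2.comp Φ) =
        ExteriorAlgebra.ι K w.2 +
          CliffordAlgebra.contractLeft (Module.Dual.eval K V w.1) ω) ↔
    (∀ ψ' : ExteriorAlgebra K (Module.Dual K V'),
      cliffordRho w (expA (K := K) (Module.finrank K V) ω * extPullback Φ ψ') =
        expA (K := K) (Module.finrank K V) ω * extPullback Φ (cliffordRho w' ψ')) := by
  constructor
  · rintro ⟨h1, h2⟩ ψ'
    exact aux_rev Φ ω hω w.1 w.2 w'.1 w'.2 h1 h2 ψ'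
  · intro H
    exact aux_fwd Φ ω hω w.1 w.2 w'.1 w'.2 H
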